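/- The ideal m₂ = {(a, b, c) ∈ W : a is even} of W equals each of the three contracted ideals ((2, 1, 1)·R) ∩ W, ((1, √2, 1)·R) ∩ W, and ((1, 1, 1+√3)·R) ∩ W, where (x)·R denotes the principal ideal of R generated by x. -/

import Mathlib

abbrev Rng : Type := ℤ × Zsqrtd 2 × Zsqrtd 3

def Wset : Set Rng :=
  {p | p.1 ≡ p.2.1.re [ZMOD 2] ∧ p.1 ≡ p.2.2.re + p.2.2.im [ZMOD 2] ∧
       p.2.1.im ≡ p.2.2.im [ZMOD 2]}

private lemma modeq_iff (a b : ℤ) : a ≡ b [ZMOD 2] ↔ ((a : ZMod 2) = b) :=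
  (ZMod.intCast_eq_intCast_iff a b 2).symm

def W : Subring Rng where
  carrier := Wset
  zero_mem' := by refine ⟨?_, ?_, ?_⟩ <;> decide
  one_mem' := by refine ⟨?_, ?_, ?_⟩ <;> decide
  add_mem' := by
    rintro a b ⟨h1, h2, h3⟩ ⟨g1, g2, g3⟩
    refine ⟨h1.add g1, ?_, h3.add g3⟩
    simpa [add_add_add_comm] using h2.add g2
  neg_mem' := by
    rintro a ⟨h1, h2, h3⟩
    refine ⟨h1.neg, ?_, h3.neg⟩
    have := h2.neg
    simp only [Wset, Set.mem_setOf_eq, Prod.fst_neg, Prod.snd_neg, Zsqrtd.re_neg,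
      Zsqrtd.im_neg, Int.modEq_iff_dvd] at this ⊢
    omega
  mul_mem' := by
    rintro a b ⟨h1, h2, h3⟩ ⟨g1, g2, g3⟩
    simp only [Wset, Set.mem_setOf_eq, Prod.fst_mul, Prod.snd_mul, Zsqrtd.re_mul,
      Zsqrtd.im_mul, modeq_iff] at h1 h2 h3 g1 g2 g3 ⊢
    push_cast at h1 h2 h3 g1 g2 g3 ⊢
    have h0 : (2 : ZMod 2) = 0 := rfl
    refine ⟨?_, ?_, ?_⟩
    · rw [← h1, ← g1, h0]; ring
    · linear_combination (b.1 : ZMod 2) * h2 + ((a.2.2.re : ZMod 2) + a.2.2.im) * g2 -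
        ((a.2.2.im : ZMod 2) * b.2.2.im) * h0
    · linear_combination (b.2.1.im : ZMod 2) * h2 - (b.2.1.im : ZMod 2) * h1
        + (b.2.1.re : ZMod 2) * h3 + ((a.2.2.re : ZMod 2) + a.2.2.im) * g3
        + (a.2.2.im : ZMod 2) * g2 - (a.2.2.im : ZMod 2) * g1
        + ((a.2.2.im : ZMod 2) * b.2.2.im) * h0

lemma mem_W_iff (x : Rng) : x ∈ W ↔ x ∈ Wset := Iff.rfl

/-- The ideal `m₂ = {(a, b, c) ∈ W : a is even}` of `W`. -/
def m2 : Ideal W where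
  carrier := {x | Even ((x : Rng).1)}
  zero_mem' := Even.zero
  add_mem' := fun hx hy => hx.add hy
  smul_mem' := fun c x hx => hx.mul_left ((c : Rng).1)

private lemma prodDvdIff2 {p q : Rng} : p ∣ q ↔ p.1 ∣ q.1 ∧ p.2.1 ∣ q.2.1 ∧ p.2.2 ∣ q.2.2 := by
  constructor
  · rintro ⟨c, rfl⟩
    exact ⟨⟨c.1, rfl⟩, ⟨c.2.1, rfl⟩, ⟨c.2.2, rfl⟩⟩
  · rintro ⟨⟨x, hx⟩, ⟨y, hy⟩, ⟨z, hz⟩⟩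
    exact ⟨(x, y, z), by ext <;> simp [hx, hy, hz]⟩

private lemma sqrtd_dvd_iff (b : Zsqrtd 2) : (Zsqrtd.sqrtd : Zsqrtd 2) ∣ b ↔ (2:ℤ) ∣ b.re := by
  constructor
  · rintro ⟨c, rfl⟩
    refine ⟨c.im, by simp [Zsqrtd.re_mul]⟩
  · rintro ⟨k, hk⟩
    refine ⟨⟨b.im, k⟩, ?_⟩
    ext <;> simp [Zsqrtd.re_mul, Zsqrtd.im_mul] <;> omega

private lemma one_add_sqrtd_dvd_iff (c : Zsqrtd 3) :
    (1 + Zsqrtd.sqrtd : Zsqrtd 3) ∣ c ↔ (2:ℤ) ∣ c.re + c.im := by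
  constructor
  · rintro ⟨d, rfl⟩
    refine ⟨d.re + 2 * d.im, ?_⟩
    simp [Zsqrtd.re_mul, Zsqrtd.im_mul, Zsqrtd.re_add, Zsqrtd.im_add]
    ring
  · rintro ⟨k, hk⟩
    refine ⟨⟨2 * c.im - k, k - c.im⟩, ?_⟩
    ext <;> simp [Zsqrtd.re_mul, Zsqrtd.im_mul, Zsqrtd.re_add, Zsqrtd.im_add] <;> omega

private lemma mem_m2_iff (x : W) : x ∈ m2 ↔ (2:ℤ) ∣ (x : Rng).1 := by
  change Even _ ↔ _
  exact even_iff_two_dvd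

/-- `m₂` equals each of the contracted ideals `((2,1,1)·R) ∩ W`, `((1,√2,1)·R) ∩ W`,
`((1,1,1+√3)·R) ∩ W`. -/
theorem stmt7 :
    m2 = Ideal.comap W.subtype
        (Ideal.span {(((2 : ℤ), (1 : Zsqrtd 2), (1 : Zsqrtd 3)) : Rng)}) ∧
    m2 = Ideal.comap W.subtype
        (Ideal.span {(((1 : ℤ), (Zsqrtd.sqrtd : Zsqrtd 2), (1 : Zsqrtd 3)) : Rng)}) ∧
    m2 = Ideal.comap W.subtype
        (Ideal.span {(((1 : ℤ), (1 : Zsqrtd 2), (1 + Zsqrtd.sqrtd : Zsqrtd 3)) : Rng)}) := by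
  refine ⟨?_, ?_, ?_⟩ <;> ext x <;>
    obtain ⟨⟨a, b, c⟩, h1, h2, h3⟩ := x <;>
    simp only [Ideal.mem_comap, Ideal.mem_span_singleton, prodDvdIff2, Subring.coe_subtype,
      isUnit_one, IsUnit.dvd, sqrtd_dvd_iff, one_add_sqrtd_dvd_iff, true_and, and_true,
      even_iff_two_dvd, mem_m2_iff] <;>
    rw [Int.modEq_iff_dvd] at h1 h2 h3 <;>
    dsimp only at h1 h2 h3 ⊢ <;>
    constructor <;> intro h <;> omega
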